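/- arXiv:math/0511353 — 3 statements merged into one kernel-verified Lean document; each statement's English description precedes it below -/
import Mathlib

section
/- Let X₁, X₂, X₃ be real Banach spaces and let i : X₁ → X₂ and j : X₂ → X₃ be injective continuous linear maps with ‖i u‖ ≤ ‖u‖ for all u ∈ X₁ and ‖j v‖ ≤ ‖v‖ for all v ∈ X₂ (comparable norms). Assume the norms of X₂ and X₃ are compatible, i.e., every sequence (vₙ) in X₂ that is Cauchy in X₂ and satisfies ‖j vₙ‖ → 0 also satisfies ‖vₙ‖ → 0. Then i is a compact operator if and only if both of the following hold: (a) the composite map j ∘ i : X₁ → X₃ is a compact operator, and (b) for every s ∈ (0,1) there exists a constant c(s) > 0 such that ‖i u‖ ≤ s‖u‖ + c(s)‖j (i u)‖ for all u ∈ X₁. -/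
open Filter Topology

/-- From a compact operator, any sequence in the closed unit ball has a subsequence whose
image converges. -/
lemma exists_subseq_image_tendsto_of_isCompactOperator
    {E F : Type*} [NormedAddCommGroup E] [NormedSpace ℝ E]
    [NormedAddCommGroup F] [NormedSpace ℝ F]
    (f : E →L[ℝ] F) (hf : IsCompactOperator f) (u : ℕ → E) (hu : ∀ n, ‖u n‖ ≤ 1) :
    ∃ φ : ℕ → ℕ, StrictMono φ ∧ ∃ v : F,
      Filter.Tendsto (fun n => f (u (φ n))) Filter.atTop (𝓝 v) := by
  have hK : IsCompact (closure (f '' Metric.closedBall 0 1)) :=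
    hf.isCompact_closure_image_closedBall 1
  have hseq : IsSeqCompact (closure (f '' Metric.closedBall 0 1)) := hK.isSeqCompact
  have hmem : ∀ n, f (u n) ∈ closure (f '' Metric.closedBall 0 1) := by
    intro n
    exact subset_closure ⟨u n, by simpa [Metric.mem_closedBall, dist_eq_norm] using hu n, rfl⟩
  obtain ⟨v, _, φ, hφ, hconv⟩ := hseq hmem
  exact ⟨φ, hφ, v, hconv⟩

/-- **Theorem 1** (Ramm). For Banach spaces `X₁ ⊂ X₂ ⊂ X₃` with comparable norms
(modeled by injective continuous linear maps `i : X₁ → X₂`, `j : X₂ → X₃` with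
`‖i u‖ ≤ ‖u‖`, `‖j v‖ ≤ ‖v‖`), and with the norms of `X₂` and `X₃` compatible,
the embedding `i` is compact iff (a) `j ∘ i` is compact and
(b) `∀ s ∈ (0,1), ∃ c > 0, ‖i u‖ ≤ s‖u‖ + c‖j (i u)‖` for all `u`. -/
theorem compact_embedding_iff
    {X₁ X₂ X₃ : Type*}
    [NormedAddCommGroup X₁] [NormedSpace ℝ X₁] [CompleteSpace X₁]
    [NormedAddCommGroup X₂] [NormedSpace ℝ X₂] [CompleteSpace X₂]
    [NormedAddCommGroup X₃] [NormedSpace ℝ X₃] [CompleteSpace X₃]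
    (i : X₁ →L[ℝ] X₂) (j : X₂ →L[ℝ] X₃)
    (hi_inj : Function.Injective i) (hj_inj : Function.Injective j)
    (hi_norm : ∀ u : X₁, ‖i u‖ ≤ ‖u‖)
    (hj_norm : ∀ v : X₂, ‖j v‖ ≤ ‖v‖)
    (hcompat : ∀ v : ℕ → X₂, CauchySeq v →
      Filter.Tendsto (fun n => ‖j (v n)‖) Filter.atTop (nhds 0) →
      Filter.Tendsto (fun n => ‖v n‖) Filter.atTop (nhds 0)) :
    IsCompactOperator i ↔
      (IsCompactOperator (j.comp i) ∧
        ∀ s ∈ Set.Ioo (0 : ℝ) 1, ∃ c > 0, ∀ u : X₁,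
          ‖i u‖ ≤ s * ‖u‖ + c * ‖j (i u)‖) := by
  constructor
  · intro hi
    constructor
    · have : IsCompactOperator (⇑j ∘ ⇑i) := hi.continuous_comp j.continuous
      simpa [ContinuousLinearMap.coe_comp'] using this
    · by_contra hb
      push_neg at hb
      obtain ⟨s, hs, hbad⟩ := hb
      -- for each n, a counterexample with c = n + 1
      have hchoice : ∀ n : ℕ, ∃ w : X₁, ‖w‖ = 1 ∧
          s + (n + 1 : ℝ) * ‖j (i w)‖ < ‖i w‖ := by
        intro n
        obtain ⟨u, hu⟩ := hbad (n + 1 : ℝ) (by positivity)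
        have hune : u ≠ 0 := by
          rintro rfl
          simp at hu
        have ht : (0 : ℝ) < ‖u‖ := norm_pos_iff.mpr hune
        refine ⟨‖u‖⁻¹ • u, ?_, ?_⟩
        · rw [norm_smul, norm_inv, norm_norm, inv_mul_cancel₀ ht.ne']
        · have h1 : i (‖u‖⁻¹ • u) = ‖u‖⁻¹ • i u := by simp
          rw [h1, map_smul, norm_smul, norm_smul, norm_inv, norm_norm]
          have hkey := mul_lt_mul_of_pos_left hu (inv_pos.mpr ht)
          have hrw : ‖u‖⁻¹ * (s * ‖u‖ + (n + 1 : ℝ) * ‖j (i u)‖)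
              = s + (n + 1 : ℝ) * (‖u‖⁻¹ * ‖j (i u)‖) := by
            field_simp
          rw [hrw] at hkey
          exact hkey
      choose w hw1 hw2 using hchoice
      obtain ⟨φ, hφ, v, hconv⟩ :=
        exists_subseq_image_tendsto_of_isCompactOperator i hi w (fun n => (hw1 n).le)
      -- norms of j (i (w (φ n))) tend to 0
      have hjb : ∀ n : ℕ, ‖j (i (w n))‖ ≤ 1 / (n + 1 : ℝ) := by
        intro n
        have h1 : ‖i (w n)‖ ≤ 1 := by
          simpa [hw1 n] using hi_norm (w n)
        have h2 := hw2 n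
        have hn : (0 : ℝ) < (n : ℝ) + 1 := by positivity
        rw [le_div_iff₀ hn]
        nlinarith [hs.1, norm_nonneg (j (i (w n)))]
      have hj0 : Tendsto (fun n => ‖j (i (w (φ n)))‖) atTop (𝓝 0) := by
        apply squeeze_zero (fun n => norm_nonneg _) (fun n => ?_)
          tendsto_one_div_add_atTop_nhds_zero_nat
        calc ‖j (i (w (φ n)))‖ ≤ 1 / ((φ n : ℝ) + 1) := hjb (φ n)
          _ ≤ 1 / ((n : ℝ) + 1) := by
              apply one_div_le_one_div_of_le (by positivity)
              have h : (n : ℝ) ≤ (φ n : ℝ) := by exact_mod_cast hφ.le_apply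
              linarith
      -- j v = 0, hence v = 0
      have hjv : Tendsto (fun n => j (i (w (φ n)))) atTop (𝓝 (j v)) :=
        (j.continuous.tendsto v).comp hconv
      have hjvn : Tendsto (fun n => ‖j (i (w (φ n)))‖) atTop (𝓝 ‖j v‖) :=
        hjv.norm
      have hjv0 : ‖j v‖ = 0 := tendsto_nhds_unique hjvn hj0
      have hv0 : v = 0 := hj_inj (by simpa [norm_eq_zero] using hjv0)
      -- but ‖v‖ ≥ s > 0
      have hvn : Tendsto (fun n => ‖i (w (φ n))‖) atTop (𝓝 ‖v‖) := hconv.norm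
      have hges : s ≤ ‖v‖ := by
        refine ge_of_tendsto' hvn (fun n => ?_)
        have h := hw2 (φ n)
        have h2 : (0:ℝ) ≤ (φ n : ℝ) := Nat.cast_nonneg _
        nlinarith [norm_nonneg (j (i (w (φ n))))]
      rw [hv0, norm_zero] at hges
      exact absurd hges (not_le.mpr hs.1)
  · rintro ⟨hji, hb⟩
    refine ⟨closure (⇑i '' Metric.closedBall 0 1), ?_, ?_⟩
    swap
    · exact Filter.mem_of_superset (Metric.closedBall_mem_nhds 0 one_pos)
        (fun u hu => subset_closure ⟨u, hu, rfl⟩)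
    rw [isCompact_iff_isSeqCompact]
    intro x hx
    -- approximate each x n by a point of the image
    have happrox : ∀ n : ℕ, ∃ u : X₁, ‖u‖ ≤ 1 ∧ dist (i u) (x n) < 1 / (n + 1 : ℝ) := by
      intro n
      have := Metric.mem_closure_iff.mp (hx n) (1 / (n + 1 : ℝ)) (by positivity)
      obtain ⟨y, hy, hyd⟩ := this
      obtain ⟨u, hu, rfl⟩ := hy
      exact ⟨u, by simpa [Metric.mem_closedBall, dist_eq_norm] using hu,
        by rwa [dist_comm] at hyd⟩
    choose u hu1 hu2 using happrox
    obtain ⟨φ, hφ, w₃, hw₃⟩ :=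
      exists_subseq_image_tendsto_of_isCompactOperator (j.comp i) hji u hu1
    -- the images under i are Cauchy
    have hjc : CauchySeq (fun n => j (i (u (φ n)))) := by
      have : (fun n => j (i (u (φ n)))) = fun n => (j.comp i) (u (φ n)) := by
        ext n; simp
      rw [this]
      exact hw₃.cauchySeq
    have hcauchy : CauchySeq (fun n => i (u (φ n))) := by
      rw [Metric.cauchySeq_iff]
      intro ε hε
      set s : ℝ := min (ε / 8) (1 / 2) with hs_def
      have hsIoo : s ∈ Set.Ioo (0 : ℝ) 1 := by
        constructor
        · apply lt_min (by positivity) (by norm_num)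
        · exact lt_of_le_of_lt (min_le_right _ _) (by norm_num)
      obtain ⟨c, hc, hcb⟩ := hb s hsIoo
      obtain ⟨N, hN⟩ := Metric.cauchySeq_iff.mp hjc (ε / (4 * c)) (by positivity)
      refine ⟨N, fun m hm n hn => ?_⟩
      have key := hcb (u (φ m) - u (φ n))
      have hd : dist (i (u (φ m))) (i (u (φ n))) = ‖i (u (φ m) - u (φ n))‖ := by
        rw [dist_eq_norm, ← map_sub]
      have hjd : ‖j (i (u (φ m) - u (φ n)))‖ = dist (j (i (u (φ m)))) (j (i (u (φ n)))) := by
        rw [dist_eq_norm, ← map_sub, ← map_sub]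
      have hub : ‖u (φ m) - u (φ n)‖ ≤ 2 :=
        le_trans (norm_sub_le _ _) (by linarith [hu1 (φ m), hu1 (φ n)])
      have hjsmall : dist (j (i (u (φ m)))) (j (i (u (φ n)))) < ε / (4 * c) := hN m hm n hn
      rw [hd]
      have hs8 : s ≤ ε / 8 := min_le_left _ _
      calc ‖i (u (φ m) - u (φ n))‖
          ≤ s * ‖u (φ m) - u (φ n)‖ + c * ‖j (i (u (φ m) - u (φ n)))‖ := key
        _ ≤ (ε / 8) * 2 + c * (ε / (4 * c)) := by
            apply add_le_add
            · exact mul_le_mul hs8 hub (norm_nonneg _) (by positivity)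
            · rw [hjd]
              exact mul_le_mul_of_nonneg_left hjsmall.le hc.le
        _ < ε := by
            have h4 : c * (ε / (4 * c)) = ε / 4 := by
              field_simp
            rw [h4]
            linarith
    obtain ⟨v, hv⟩ := cauchySeq_tendsto_of_complete hcauchy
    refine ⟨v, ?_, φ, hφ, ?_⟩
    · -- v is in the closure of the image
      apply mem_closure_of_tendsto hv
      filter_upwards with n
      exact ⟨u (φ n), by simpa [Metric.mem_closedBall, dist_eq_norm] using hu1 (φ n), rfl⟩
    · -- x ∘ φ tends to v as well
      rw [tendsto_iff_dist_tendsto_zero]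
      have hbnd : ∀ n : ℕ, dist ((x ∘ φ) n) v ≤ 1 / ((n : ℝ) + 1) + dist (i (u (φ n))) v := by
        intro n
        calc dist ((x ∘ φ) n) v ≤ dist (x (φ n)) (i (u (φ n))) + dist (i (u (φ n))) v :=
              dist_triangle _ _ _
          _ ≤ 1 / ((n : ℝ) + 1) + dist (i (u (φ n))) v := by
              apply add_le_add_left
              rw [dist_comm]
              refine le_trans (hu2 (φ n)).le ?_
              apply one_div_le_one_div_of_le (by positivity)
              have h : (n : ℝ) ≤ (φ n : ℝ) := by exact_mod_cast hφ.le_apply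
              linarith
      have hg : Tendsto (fun n : ℕ => 1 / ((n : ℝ) + 1) + dist (i (u (φ n))) v)
          atTop (𝓝 0) := by
        have := Tendsto.add tendsto_one_div_add_atTop_nhds_zero_nat
          (tendsto_iff_dist_tendsto_zero.mp hv)
        simpa using this
      exact squeeze_zero (fun n => dist_nonneg) hbnd hg
end

section
/- Let X₁, X₂, X₃ be real Banach spaces and let i : X₁ → X₂ and j : X₂ → X₃ be continuous linear maps with ‖i u‖ ≤ ‖u‖ for all u ∈ X₁ and ‖j v‖ ≤ ‖v‖ for all v ∈ X₂. Assume (a) the composite j ∘ i : X₁ → X₃ is a compact operator, and (b) for every s ∈ (0,1) there exists a constant c(s) > 0 such that ‖i u‖ ≤ s‖u‖ + c(s)‖j (i u)‖ for all u ∈ X₁. Then i : X₁ → X₂ is a compact operator. (No compatibility of the norms of X₂ and X₃ is required for this direction.) -/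
/-- Sufficiency part of Theorem 1: conditions (a) and (b) imply that the
embedding `i : X₁ → X₂` is compact (no compatibility of norms needed). -/
theorem compact_embedding_of_conditions
    {X₁ X₂ X₃ : Type*}
    [NormedAddCommGroup X₁] [NormedSpace ℝ X₁] [CompleteSpace X₁]
    [NormedAddCommGroup X₂] [NormedSpace ℝ X₂] [CompleteSpace X₂]
    [NormedAddCommGroup X₃] [NormedSpace ℝ X₃] [CompleteSpace X₃]
    (i : X₁ →L[ℝ] X₂) (j : X₂ →L[ℝ] X₃)
    (hi_norm : ∀ u : X₁, ‖i u‖ ≤ ‖u‖)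
    (hj_norm : ∀ v : X₂, ‖j v‖ ≤ ‖v‖)
    (ha : IsCompactOperator (j.comp i))
    (hb : ∀ s ∈ Set.Ioo (0 : ℝ) 1, ∃ c > 0, ∀ u : X₁,
      ‖i u‖ ≤ s * ‖u‖ + c * ‖j (i u)‖) :
    IsCompactOperator i := by
  rw [show (⇑i = ⇑(i : X₁ →ₗ[ℝ] X₂)) from rfl,
    isCompactOperator_iff_isCompact_closure_image_ball (𝕜₁ := ℝ)
      (i : X₁ →ₗ[ℝ] X₂) (one_pos)]
  apply TotallyBounded.isCompact_of_isClosed _ isClosed_closure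
  apply TotallyBounded.closure
  -- total boundedness of j ∘ i image
  have htb : TotallyBounded ((j.comp i) '' Metric.ball 0 1) := by
    have := (ha.isCompact_closure_image_ball (𝕜₁ := ℝ) 1).totallyBounded
    exact this.subset subset_closure
  rw [Metric.totallyBounded_iff] at htb ⊢
  intro ε hε
  set s : ℝ := min (ε / 4) (1 / 2) with hs
  have hs0 : 0 < s := lt_min (by linarith) (by norm_num)
  have hs1 : s < 1 := lt_of_le_of_lt (min_le_right _ _) (by norm_num)
  obtain ⟨c, hc0, hc⟩ := hb s ⟨hs0, hs1⟩
  obtain ⟨t, htfin, htcov⟩ := htb (ε / (4 * c)) (by positivity)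
  -- for each center hit by the image, choose a preimage point in the ball
  classical
  have hchoice : ∀ y ∈ t, ∃ u : X₁, u ∈ Metric.ball (0 : X₁) 1 →
      True := fun y _ => ⟨0, fun _ => trivial⟩
  -- Set of chosen points
  set T : Set X₃ := {y ∈ t | ∃ u ∈ Metric.ball (0 : X₁) 1, j (i u) ∈ Metric.ball y (ε / (4 * c))}
  have hTfin : T.Finite := htfin.subset (Set.sep_subset _ _)
  choose! pick hpick1 hpick2 using fun y (hy : y ∈ T) => hy.2
  refine ⟨(fun y => i (pick y)) '' T, hTfin.image _, ?_⟩
  rintro _ ⟨u, hu, rfl⟩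
  have hju : j (i u) ∈ (j.comp i) '' Metric.ball 0 1 := ⟨u, hu, rfl⟩
  obtain ⟨y, hyt, hyball⟩ := Set.mem_iUnion₂.mp (htcov hju)
  have hyT : y ∈ T := ⟨hyt, u, hu, hyball⟩
  refine Set.mem_iUnion₂.mpr ⟨i (pick y), ⟨y, hyT, rfl⟩, ?_⟩
  have hv := hpick1 y hyT
  have hvball := hpick2 y hyT
  set v := pick y
  -- estimate ‖i u - i v‖
  have key : ‖i u - i v‖ < ε := by
    have h1 : ‖i (u - v)‖ ≤ s * ‖u - v‖ + c * ‖j (i (u - v))‖ := hc (u - v)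
    have h2 : ‖u - v‖ ≤ 2 := by
      have hu' : ‖u‖ < 1 := by simpa using Metric.mem_ball.mp hu
      have hv' : ‖v‖ < 1 := by simpa using Metric.mem_ball.mp hv
      calc ‖u - v‖ ≤ ‖u‖ + ‖v‖ := norm_sub_le u v
        _ ≤ 2 := by linarith
    have h3 : ‖j (i (u - v))‖ < ε / (2 * c) := by
      have : j (i (u - v)) = j (i u) - j (i v) := by simp
      rw [this]
      have d1 : dist (j (i u)) y < ε / (4 * c) := Metric.mem_ball.mp hyball
      have d2 : dist (j (i v)) y < ε / (4 * c) := Metric.mem_ball.mp hvball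
      calc ‖j (i u) - j (i v)‖ = dist (j (i u)) (j (i v)) := (dist_eq_norm _ _).symm
        _ ≤ dist (j (i u)) y + dist (j (i v)) y := dist_triangle_right _ _ _
        _ < ε / (4 * c) + ε / (4 * c) := by linarith
        _ = ε / (2 * c) := by ring
    have h4 : ‖i u - i v‖ = ‖i (u - v)‖ := by rw [map_sub]
    have h5 : s * ‖u - v‖ ≤ ε / 2 := by
      have : s ≤ ε / 4 := min_le_left _ _
      nlinarith [norm_nonneg (u - v), hs0.le]
    have h6 : c * ‖j (i (u - v))‖ < ε / 2 := by
      have := mul_lt_mul_of_pos_left h3 hc0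
      calc c * ‖j (i (u - v))‖ < c * (ε / (2 * c)) := this
        _ = ε / 2 := by field_simp
    linarith [h1, h4.le]
  simpa [Metric.mem_ball, dist_eq_norm] using key
end

section
/- Let X₁, X₂, X₃ be real Banach spaces and let i : X₁ → X₂ and j : X₂ → X₃ be injective continuous linear maps with ‖i u‖ ≤ ‖u‖ for all u ∈ X₁ and ‖j v‖ ≤ ‖v‖ for all v ∈ X₂. Assume the norms of X₂ and X₃ are compatible, i.e., every sequence (vₙ) in X₂ that is Cauchy in X₂ and satisfies ‖j vₙ‖ → 0 also satisfies ‖vₙ‖ → 0. If i : X₁ → X₂ is a compact operator, then for every s ∈ (0,1) there exists a constant c(s) > 0 such that ‖i u‖ ≤ s‖u‖ + c(s)‖j (i u)‖ for all u ∈ X₁. -/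
/-- Necessity of condition (b) in Theorem 1: if the norms of `X₂` and `X₃` are
compatible and the embedding `i : X₁ → X₂` is compact, then for every
`s ∈ (0,1)` there is `c > 0` with `‖i u‖ ≤ s‖u‖ + c‖j (i u)‖` for all `u`. -/
theorem interpolation_inequality_of_compact
    {X₁ X₂ X₃ : Type*}
    [NormedAddCommGroup X₁] [NormedSpace ℝ X₁] [CompleteSpace X₁]
    [NormedAddCommGroup X₂] [NormedSpace ℝ X₂] [CompleteSpace X₂]
    [NormedAddCommGroup X₃] [NormedSpace ℝ X₃] [CompleteSpace X₃]
    (i : X₁ →L[ℝ] X₂) (j : X₂ →L[ℝ] X₃)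
    (hi_inj : Function.Injective i) (hj_inj : Function.Injective j)
    (hi_norm : ∀ u : X₁, ‖i u‖ ≤ ‖u‖)
    (hj_norm : ∀ v : X₂, ‖j v‖ ≤ ‖v‖)
    (hcompat : ∀ v : ℕ → X₂, CauchySeq v →
      Filter.Tendsto (fun n => ‖j (v n)‖) Filter.atTop (nhds 0) →
      Filter.Tendsto (fun n => ‖v n‖) Filter.atTop (nhds 0))
    (hcompact : IsCompactOperator i) :
    ∀ s ∈ Set.Ioo (0 : ℝ) 1, ∃ c > 0, ∀ u : X₁,
      ‖i u‖ ≤ s * ‖u‖ + c * ‖j (i u)‖ := by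
  intro s hs
  by_contra hcon
  push_neg at hcon
  choose u hu using fun n : ℕ => hcon (n + 1) (by positivity)
  have hu0 : ∀ n, u n ≠ 0 := by
    intro n h
    have := hu n
    rw [h] at this
    simp at this
  set w : ℕ → X₁ := fun n => ‖u n‖⁻¹ • u n with hw
  have hw1 : ∀ n, ‖w n‖ = 1 := fun n => norm_smul_inv_norm (hu0 n)
  -- scaled inequality
  have hkey : ∀ n : ℕ, s + (n + 1) * ‖j (i (w n))‖ < ‖i (w n)‖ := by
    intro n
    have hpos : (0:ℝ) < ‖u n‖ := norm_pos_iff.mpr (hu0 n)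
    have h1 : i (w n) = ‖u n‖⁻¹ • i (u n) := by simp [hw]
    have h2 : j (i (w n)) = ‖u n‖⁻¹ • j (i (u n)) := by simp [h1]
    rw [h1, map_smul, norm_smul, norm_smul]
    simp only [norm_inv, norm_norm]
    have h3 : ‖u n‖⁻¹ * ‖u n‖ = 1 := inv_mul_cancel₀ (ne_of_gt hpos)
    have h4 := mul_lt_mul_of_pos_left (hu n) (inv_pos.mpr hpos)
    have h5 : ‖u n‖⁻¹ * (s * ‖u n‖) = s := by field_simp
    rw [mul_add, h5] at h4
    ring_nf at h4 ⊢
    linarith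
  have hsle : ∀ n, s ≤ ‖i (w n)‖ := by
    intro n
    have := hkey n
    nlinarith [norm_nonneg (j (i (w n))), (show (0:ℝ) ≤ (n:ℝ) + 1 by positivity)]
  have hile : ∀ n, ‖i (w n)‖ ≤ 1 := fun n => (hi_norm (w n)).trans_eq (hw1 n)
  have hjlt : ∀ n : ℕ, ‖j (i (w n))‖ < 1 / (n + 1) := by
    intro n
    have h1 := hkey n
    have h2 := hile n
    have hn : (0:ℝ) < (n:ℝ) + 1 := by positivity
    rw [lt_div_iff₀ hn]
    nlinarith [hs.1]
  -- compactness
  obtain ⟨K, hK, hKmem⟩ := hcompact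
  obtain ⟨r, hr, hball⟩ := Metric.mem_nhds_iff.mp hKmem
  set x : ℕ → X₁ := fun n => (r / 2) • w n with hx
  have hxK : ∀ n, i (x n) ∈ K := by
    intro n
    apply hball
    rw [Metric.mem_ball, dist_zero_right, hx]
    simp only [norm_smul, hw1, mul_one]
    rw [Real.norm_eq_abs, abs_of_pos (by linarith)]
    linarith
  obtain ⟨a, haK, φ, hφ, hconv⟩ := hK.tendsto_subseq hxK
  set v : ℕ → X₂ := fun n => i (x (φ n)) with hv
  have hcauchy : CauchySeq v := hconv.cauchySeq
  have hjv : Filter.Tendsto (fun n => ‖j (v n)‖) Filter.atTop (nhds 0) := by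
    apply squeeze_zero (fun n => norm_nonneg _) (g := fun n : ℕ => (r / 2) * (1 / (n + 1)))
    · intro n
      have : j (v n) = (r / 2) • j (i (w (φ n))) := by simp [hv, hx]
      rw [this, norm_smul, Real.norm_eq_abs, abs_of_pos (by linarith)]
      have h1 : ‖j (i (w (φ n)))‖ < 1 / (φ n + 1) := hjlt (φ n)
      have h2 : (1:ℝ) / (φ n + 1) ≤ 1 / (n + 1) := by
        apply div_le_div_of_nonneg_left one_pos.le (by positivity)
        have h3 : n ≤ φ n := hφ.le_apply
        push_cast
        exact_mod_cast by exact_mod_cast add_le_add_left (Nat.cast_le.mpr h3 : (n:ℝ) ≤ φ n) 1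
      nlinarith [hr]
    · have : Filter.Tendsto (fun n : ℕ => 1 / ((n:ℝ) + 1)) Filter.atTop (nhds 0) :=
        tendsto_one_div_add_atTop_nhds_zero_nat
      have := this.const_mul (r / 2)
      simpa using this
  have hnv := hcompat v hcauchy hjv
  -- but ‖v n‖ ≥ (r/2) * s
  have hlb : ∀ n, (r / 2) * s ≤ ‖v n‖ := by
    intro n
    have : v n = (r / 2) • i (w (φ n)) := by simp [hv, hx]
    rw [this, norm_smul, Real.norm_eq_abs, abs_of_pos (by linarith)]
    have := hsle (φ n)
    nlinarith [hr]
  have : (r / 2) * s ≤ 0 := le_of_tendsto_of_tendsto tendsto_const_nhds hnv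
    (Filter.Eventually.of_forall hlb)
  nlinarith [hs.1, hr]
end
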